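/- Let δ > 0, 0 < σ < 1/2, W > 0 and ψ ∈ ℝ. For λ large enough that δ²λ^{2σ} < λ, set a_λ := δλ^σ, b_λ := (λ − δ²λ^{2σ})^{1/2}, τ_λ := W/a_λ, u_λ(τ_λ) := (1/b_λ)∫₀^{τ_λ} e^{−a_λ(τ_λ−s)} sin(b_λ(τ_λ−s)) sin(b_λ(τ_λ−s)+ψ) ds, and u_λ'(τ_λ) := −a_λ u_λ(τ_λ) + ∫₀^{τ_λ} e^{−a_λ(τ_λ−s)} cos(b_λ(τ_λ−s)) sin(b_λ(τ_λ−s)+ψ) ds. Then lim_{λ→+∞} λ^{σ+1/2} u_λ(τ_λ) = (1/(2δ))(1 − e^{−W}) cos ψ and lim_{λ→+∞} λ^σ u_λ'(τ_λ) = (1/(2δ))(1 − e^{−W}) sin ψ. -/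

import Mathlib

open Filter

/-- `a_λ := δλ^σ`. -/
noncomputable def al (δ σ lam : ℝ) : ℝ := δ * lam ^ σ

/-- `b_λ := (λ − δ²λ^{2σ})^{1/2}`. -/
noncomputable def bl (δ σ lam : ℝ) : ℝ := (lam - δ ^ 2 * lam ^ (2 * σ)) ^ ((1 : ℝ) / 2)

/-- `τ_λ := W/a_λ`. -/
noncomputable def tl (δ σ W lam : ℝ) : ℝ := W / al δ σ lam

/-- `u_λ(τ_λ)` for the forcing term `f_λ(t) := sin(b_λ(τ_λ − t) + ψ)`. -/
noncomputable def uTau (δ σ W ψ lam : ℝ) : ℝ :=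
  (1 / bl δ σ lam) * ∫ s in (0 : ℝ)..(tl δ σ W lam),
    Real.exp (-(al δ σ lam) * (tl δ σ W lam - s)) *
      Real.sin (bl δ σ lam * (tl δ σ W lam - s)) *
      Real.sin (bl δ σ lam * (tl δ σ W lam - s) + ψ)

/-- `u_λ'(τ_λ)` for the forcing term `f_λ(t) := sin(b_λ(τ_λ − t) + ψ)`. -/
noncomputable def uTau' (δ σ W ψ lam : ℝ) : ℝ :=
  -(al δ σ lam) * uTau δ σ W ψ lam + ∫ s in (0 : ℝ)..(tl δ σ W lam),
    Real.exp (-(al δ σ lam) * (tl δ σ W lam - s)) *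
      Real.cos (bl δ σ lam * (tl δ σ W lam - s)) *
      Real.sin (bl δ σ lam * (tl δ σ W lam - s) + ψ)


lemma sin_mul_sin (x y : ℝ) : Real.sin x * Real.sin y = (Real.cos (y - x) - Real.cos (y + x))/2 := by
  rw [Real.cos_sub, Real.cos_add]; ring

lemma cos_mul_sin (x y : ℝ) : Real.cos x * Real.sin y = (Real.sin (y - x) + Real.sin (y + x))/2 := by
  rw [Real.sin_sub, Real.sin_add]; ring

lemma hasDeriv1 (a b τ ψ : ℝ) (ha : 0 < a) (s : ℝ) :
    HasDerivAt (fun s => Real.cos ψ/(2*a) * Real.exp (-a*(τ-s))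
      - Real.exp (-a*(τ-s)) * (a*Real.cos (2*b*(τ-s)+ψ) - 2*b*Real.sin (2*b*(τ-s)+ψ)) / (2*(a^2+4*b^2)))
      (Real.exp (-a*(τ-s)) * Real.sin (b*(τ-s)) * Real.sin (b*(τ-s)+ψ)) s := by
  have hK : (0:ℝ) < a^2+4*b^2 := by positivity
  have h1 : HasDerivAt (fun s : ℝ => -a*(τ-s)) a s := by
    have := ((hasDerivAt_id s).const_sub τ).const_mul (-a)
    exact this.congr_deriv (by ring)
  have h2 : HasDerivAt (fun s : ℝ => 2*b*(τ-s)+ψ) (-(2*b)) s := by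
    have := (((hasDerivAt_id s).const_sub τ).const_mul (2*b)).add_const ψ
    exact this.congr_deriv (by ring)
  have hE : HasDerivAt (fun s => Real.exp (-a*(τ-s))) (Real.exp (-a*(τ-s)) * a) s := h1.exp
  have hA : HasDerivAt (fun s => a*Real.cos (2*b*(τ-s)+ψ) - 2*b*Real.sin (2*b*(τ-s)+ψ))
      (a*(-Real.sin (2*b*(τ-s)+ψ) * (-(2*b))) - 2*b*(Real.cos (2*b*(τ-s)+ψ) * (-(2*b)))) s :=
    (h2.cos.const_mul a).sub (h2.sin.const_mul (2*b))
  have hfull := ((hE.const_mul (Real.cos ψ/(2*a))).sub ((hE.mul hA).div_const (2*(a^2+4*b^2))))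
  refine hfull.congr_deriv (Eq.symm ?_)
  rw [mul_assoc, sin_mul_sin,
    show b*(τ-s)+ψ - b*(τ-s) = ψ by ring,
    show b*(τ-s)+ψ + b*(τ-s) = 2*b*(τ-s)+ψ by ring]
  field_simp
  ring

lemma antider1 (a b τ ψ : ℝ) (ha : 0 < a) :
    (∫ s in (0:ℝ)..τ, Real.exp (-a*(τ-s)) * Real.sin (b*(τ-s)) * Real.sin (b*(τ-s)+ψ))
    = Real.cos ψ * (1 - Real.exp (-a*τ)) / (2*a)
      - (a * Real.cos ψ - 2*b*Real.sin ψ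
         - Real.exp (-a*τ) * (a*Real.cos (2*b*τ+ψ) - 2*b*Real.sin (2*b*τ+ψ))) / (2*(a^2+4*b^2)) := by
  have hK : (0:ℝ) < a^2+4*b^2 := by positivity
  rw [intervalIntegral.integral_eq_sub_of_hasDerivAt (fun s _ => hasDeriv1 a b τ ψ ha s)
    (by apply Continuous.intervalIntegrable; continuity)]
  simp only [sub_self, mul_zero, Real.exp_zero, zero_add, sub_zero]
  field_simp
  ring

lemma hasDeriv2 (a b τ ψ : ℝ) (ha : 0 < a) (s : ℝ) :
    HasDerivAt (fun s => Real.sin ψ/(2*a) * Real.exp (-a*(τ-s))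
      + Real.exp (-a*(τ-s)) * (2*b*Real.cos (2*b*(τ-s)+ψ) + a*Real.sin (2*b*(τ-s)+ψ)) / (2*(a^2+4*b^2)))
      (Real.exp (-a*(τ-s)) * Real.cos (b*(τ-s)) * Real.sin (b*(τ-s)+ψ)) s := by
  have hK : (0:ℝ) < a^2+4*b^2 := by positivity
  have h1 : HasDerivAt (fun s : ℝ => -a*(τ-s)) a s := by
    have := ((hasDerivAt_id s).const_sub τ).const_mul (-a)
    exact this.congr_deriv (by ring)
  have h2 : HasDerivAt (fun s : ℝ => 2*b*(τ-s)+ψ) (-(2*b)) s := by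
    have := (((hasDerivAt_id s).const_sub τ).const_mul (2*b)).add_const ψ
    exact this.congr_deriv (by ring)
  have hE : HasDerivAt (fun s => Real.exp (-a*(τ-s))) (Real.exp (-a*(τ-s)) * a) s := h1.exp
  have hA : HasDerivAt (fun s => 2*b*Real.cos (2*b*(τ-s)+ψ) + a*Real.sin (2*b*(τ-s)+ψ))
      (2*b*(-Real.sin (2*b*(τ-s)+ψ) * (-(2*b))) + a*(Real.cos (2*b*(τ-s)+ψ) * (-(2*b)))) s :=
    (h2.cos.const_mul (2*b)).add (h2.sin.const_mul a)
  have hfull := ((hE.const_mul (Real.sin ψ/(2*a))).add ((hE.mul hA).div_const (2*(a^2+4*b^2))))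
  refine hfull.congr_deriv (Eq.symm ?_)
  rw [mul_assoc, cos_mul_sin,
    show b*(τ-s)+ψ - b*(τ-s) = ψ by ring,
    show b*(τ-s)+ψ + b*(τ-s) = 2*b*(τ-s)+ψ by ring]
  field_simp
  ring

lemma antider2 (a b τ ψ : ℝ) (ha : 0 < a) :
    (∫ s in (0:ℝ)..τ, Real.exp (-a*(τ-s)) * Real.cos (b*(τ-s)) * Real.sin (b*(τ-s)+ψ))
    = Real.sin ψ * (1 - Real.exp (-a*τ)) / (2*a)
      + (2*b*Real.cos ψ + a*Real.sin ψ
         - Real.exp (-a*τ) * (2*b*Real.cos (2*b*τ+ψ) + a*Real.sin (2*b*τ+ψ))) / (2*(a^2+4*b^2)) := by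
  have hK : (0:ℝ) < a^2+4*b^2 := by positivity
  rw [intervalIntegral.integral_eq_sub_of_hasDerivAt (fun s _ => hasDeriv2 a b τ ψ ha s)
    (by apply Continuous.intervalIntegrable; continuity)]
  simp only [sub_self, mul_zero, Real.exp_zero, zero_add, sub_zero]
  field_simp
  ring

lemma sq_rpow_half (x : ℝ) (hx : 0 ≤ x) : (x ^ ((1:ℝ)/2))^2 = x := by
  rw [← Real.rpow_natCast (x ^ ((1:ℝ)/2)) 2, ← Real.rpow_mul hx]
  norm_num

lemma abs_sub_le' (x y : ℝ) : |x - y| ≤ |x| + |y| := abs_sub x y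

lemma abs_trig₁ (p q x y : ℝ) (hp : 0 ≤ p) (hq : 0 ≤ q) :
    |p * Real.cos x - q * Real.sin y| ≤ p + q := by
  have h1 : |p*Real.cos x| ≤ p := by
    rw [abs_mul, abs_of_nonneg hp]; exact mul_le_of_le_one_right hp (Real.abs_cos_le_one x)
  have h2 : |q*Real.sin y| ≤ q := by
    rw [abs_mul, abs_of_nonneg hq]; exact mul_le_of_le_one_right hq (Real.abs_sin_le_one y)
  calc |p*Real.cos x - q*Real.sin y| ≤ |p*Real.cos x| + |q*Real.sin y| := abs_sub _ _
    _ ≤ p + q := add_le_add h1 h2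

lemma abs_trig₂ (p q x y : ℝ) (hp : 0 ≤ p) (hq : 0 ≤ q) :
    |p * Real.cos x + q * Real.sin y| ≤ p + q := by
  have h1 : |p*Real.cos x| ≤ p := by
    rw [abs_mul, abs_of_nonneg hp]; exact mul_le_of_le_one_right hp (Real.abs_cos_le_one x)
  have h2 : |q*Real.sin y| ≤ q := by
    rw [abs_mul, abs_of_nonneg hq]; exact mul_le_of_le_one_right hq (Real.abs_sin_le_one y)
  calc |p*Real.cos x + q*Real.sin y| ≤ |p*Real.cos x| + |q*Real.sin y| := abs_add_le _ _
    _ ≤ p + q := add_le_add h1 h2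



set_option maxHeartbeats 2000000 in
/-- in the subcritical regime `0 < σ < 1/2`, with the oscillating forcing
term `sin(b_λ(τ_λ − t) + ψ)` and `τ_λ = W/a_λ`, one has
`λ^{σ+1/2} u_λ(τ_λ) → (1/(2δ))(1 − e^{−W})cos ψ` and
`λ^σ u_λ'(τ_λ) → (1/(2δ))(1 − e^{−W})sin ψ` as `λ → +∞`. -/
theorem subcritical_blowup_limits (δ σ W ψ : ℝ) (hδ : 0 < δ) (hσ0 : 0 < σ)
    (hσ : σ < 1 / 2) (hW : 0 < W) :
    Tendsto (fun lam : ℝ => lam ^ (σ + (1 : ℝ) / 2) * uTau δ σ W ψ lam) atTop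
      (nhds ((1 / (2 * δ)) * (1 - Real.exp (-W)) * Real.cos ψ)) ∧
    Tendsto (fun lam : ℝ => lam ^ σ * uTau' δ σ W ψ lam) atTop
      (nhds ((1 / (2 * δ)) * (1 - Real.exp (-W)) * Real.sin ψ)) := by
  have hδ' : δ ≠ 0 := ne_of_gt hδ
  -- basic tendsto facts
  have h2σ : Tendsto (fun lam : ℝ => lam ^ (2*σ-1)) atTop (nhds 0) := by
    have h := tendsto_rpow_neg_atTop (show (0:ℝ) < 1-2*σ by linarith)
    have : (fun lam : ℝ => lam ^ (2*σ-1)) = fun lam : ℝ => lam ^ (-(1-2*σ)) := by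
      funext lam; congr 1; ring
    rw [this]; exact h
  have hσhalf : Tendsto (fun lam : ℝ => lam ^ (σ-(1:ℝ)/2)) atTop (nhds 0) := by
    have h := tendsto_rpow_neg_atTop (show (0:ℝ) < 1/2-σ by linarith)
    have : (fun lam : ℝ => lam ^ (σ-(1:ℝ)/2)) = fun lam : ℝ => lam ^ (-((1:ℝ)/2-σ)) := by
      funext lam; congr 1; ring
    rw [this]; exact h
  have hbase : ∀ᶠ lam : ℝ in atTop, 1 < lam ∧ δ^2 * lam^(2*σ-1) ≤ 1/2 := by
    have h1 : Tendsto (fun lam : ℝ => δ^2 * lam^(2*σ-1)) atTop (nhds 0) := by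
      simpa using h2σ.const_mul (δ^2)
    filter_upwards [eventually_gt_atTop 1,
      h1.eventually_lt_const (show (0:ℝ) < 1/2 by norm_num)] with lam ha hb
    exact ⟨ha, le_of_lt hb⟩
  -- ratio lam^{1/2}/b → 1
  have hratio : Tendsto (fun lam : ℝ => lam ^ ((1:ℝ)/2) / bl δ σ lam) atTop (nhds 1) := by
    have hzl : Tendsto (fun lam : ℝ => 1 - δ^2*lam^(2*σ-1)) atTop (nhds 1) := by
      have := ((tendsto_const_nhds : Tendsto (fun _ : ℝ => (1:ℝ)) atTop (nhds 1)).sub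
        (h2σ.const_mul (δ^2)))
      simpa using this
    have hq : Tendsto (fun lam : ℝ => (1 - δ^2*lam^(2*σ-1))⁻¹) atTop (nhds 1) := by
      simpa using hzl.inv₀ one_ne_zero
    have hcont : ContinuousAt (fun x : ℝ => x ^ ((1:ℝ)/2)) 1 :=
      Real.continuousAt_rpow_const 1 _ (Or.inl one_ne_zero)
    have hcomp := hcont.tendsto.comp hq
    rw [Real.one_rpow] at hcomp
    refine hcomp.congr' ?_
    simp only [Function.comp_def]
    filter_upwards [hbase] with lam hl
    obtain ⟨h1, h2⟩ := hl
    have hlam : (0:ℝ) < lam := lt_trans one_pos h1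
    have h2σpow : lam^(2*σ) = lam^(2*σ-1) * lam := by
      rw [← Real.rpow_add_one (ne_of_gt hlam)]
      congr 1; ring
    have hz2 : lam ≤ 2*(lam - δ^2 * lam^(2*σ)) := by
      have hle : δ^2*lam^(2*σ) ≤ (1/2)*lam := by
        rw [h2σpow, show δ^2*(lam^(2*σ-1)*lam) = (δ^2*lam^(2*σ-1))*lam by ring]
        exact mul_le_mul_of_nonneg_right h2 hlam.le
      linarith
    have hzpos : (0:ℝ) < lam - δ^2 * lam^(2*σ) := by linarith
    have he : 1 - δ^2*lam^(2*σ-1) = (lam - δ^2 * lam^(2*σ))/lam := by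
      rw [h2σpow]; field_simp
    rw [he, inv_div, Real.div_rpow hlam.le hzpos.le]
    rfl
  -- pointwise bounds
  have hbound : ∀ᶠ lam : ℝ in atTop,
      |lam ^ (σ + (1:ℝ)/2) * uTau δ σ W ψ lam
        - lam ^ ((1:ℝ)/2) / bl δ σ lam * (Real.cos ψ * (1-Real.exp (-W))/(2*δ))| ≤ 2 * lam^(σ-(1:ℝ)/2)
      ∧ |lam ^ σ * uTau' δ σ W ψ lam
        - -δ*lam^(σ-(1:ℝ)/2)*(lam ^ (σ + (1:ℝ)/2) * uTau δ σ W ψ lam)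
        - Real.sin ψ * (1-Real.exp (-W))/(2*δ)| ≤ 2 * lam^(σ-(1:ℝ)/2) := by
    filter_upwards [hbase] with lam hl
    obtain ⟨h1, h2⟩ := hl
    have hlam : (0:ℝ) < lam := lt_trans one_pos h1
    set a := al δ σ lam with hadef
    set b := bl δ σ lam with hbdef
    set τ := tl δ σ W lam with hτdef
    set u := lam^(σ-(1:ℝ)/2) with hudef
    set s := lam^((1:ℝ)/2) with hsdef
    have hu : 0 < u := Real.rpow_pos_of_pos hlam _
    have hs : 0 < s := Real.rpow_pos_of_pos hlam _
    have hs2 : s^2 = lam := sq_rpow_half lam hlam.le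
    have hσpow : lam ^ σ = u * s := by
      rw [hudef, hsdef, ← Real.rpow_add hlam]; norm_num
    have hpow1 : lam^(σ+(1:ℝ)/2) = u * lam := by
      rw [hudef, ← Real.rpow_add_one (ne_of_gt hlam)]
      congr 1; ring
    have h2σpow : lam^(2*σ) = lam^(2*σ-1) * lam := by
      rw [← Real.rpow_add_one (ne_of_gt hlam)]
      congr 1; ring
    set z := lam - δ^2 * lam^(2*σ) with hzdef
    have hz2 : lam ≤ 2*z := by
      have hle : δ^2*lam^(2*σ) ≤ (1/2)*lam := by
        rw [h2σpow, show δ^2*(lam^(2*σ-1)*lam) = (δ^2*lam^(2*σ-1))*lam by ring]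
        exact mul_le_mul_of_nonneg_right h2 hlam.le
      rw [hzdef]; linarith
    have hzpos : 0 < z := by linarith
    have hb_def : b = z^((1:ℝ)/2) := rfl
    have hbpos : 0 < b := hb_def ▸ Real.rpow_pos_of_pos hzpos _
    have hb2 : b^2 = z := hb_def ▸ sq_rpow_half z hzpos.le
    have ha_def : a = δ * (u*s) := by rw [hadef, al, hσpow]
    have hapos : 0 < a := by rw [ha_def]; positivity
    have haτ : a * τ = W := by rw [hτdef, tl, ← hadef]; field_simp
    have h3s : 3*s ≤ 8*b := by
      have h9 : (3*s)^2 ≤ (8*b)^2 := by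
        rw [mul_pow, mul_pow, hs2, hb2]; linarith only [hz2, hlam]
      exact (pow_le_pow_iff_left₀ (by positivity) (by positivity) two_ne_zero).mp h9
    set K := a^2 + 4*b^2 with hKdef
    have hKpos : 0 < K := by positivity
    have hexpW : Real.exp (-W) ≤ 1 := by
      rw [← Real.exp_zero]; exact Real.exp_le_exp.mpr (by linarith)
    have hnegaτ : -a*τ = -W := by rw [neg_mul, haτ]
    -- closed forms
    set D1 := a * Real.cos ψ - 2*b*Real.sin ψ
         - Real.exp (-W) * (a*Real.cos (2*b*τ+ψ) - 2*b*Real.sin (2*b*τ+ψ)) with hD1def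
    set D2 := 2*b*Real.cos ψ + a*Real.sin ψ
         - Real.exp (-W) * (2*b*Real.cos (2*b*τ+ψ) + a*Real.sin (2*b*τ+ψ)) with hD2def
    have hI1 : uTau δ σ W ψ lam
        = (1/b) * (Real.cos ψ * (1 - Real.exp (-W))/(2*a) - D1/(2*K)) := by
      have e1 : uTau δ σ W ψ lam = (1/b) * ∫ x in (0:ℝ)..τ,
          Real.exp (-a*(τ-x)) * Real.sin (b*(τ-x)) * Real.sin (b*(τ-x)+ψ) := rfl
      rw [e1, antider1 a b τ ψ hapos, hnegaτ, hD1def, hKdef]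
    have hU' : uTau' δ σ W ψ lam
        = -a * uTau δ σ W ψ lam + (Real.sin ψ*(1-Real.exp (-W))/(2*a) + D2/(2*K)) := by
      have e2 : uTau' δ σ W ψ lam = -a * uTau δ σ W ψ lam + ∫ x in (0:ℝ)..τ,
          Real.exp (-a*(τ-x)) * Real.cos (b*(τ-x)) * Real.sin (b*(τ-x)+ψ) := rfl
      rw [e2, antider2 a b τ ψ hapos, hnegaτ, hD2def, hKdef]
    -- |D| bounds
    have hD1abs : |D1| ≤ 2*(a+2*b) := by
      have e1 : |a * Real.cos ψ - 2*b*Real.sin ψ| ≤ a + 2*b :=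
        abs_trig₁ a (2*b) ψ ψ hapos.le (by positivity)
      have e2 : |a*Real.cos (2*b*τ+ψ) - 2*b*Real.sin (2*b*τ+ψ)| ≤ a + 2*b :=
        abs_trig₁ a (2*b) _ _ hapos.le (by positivity)
      calc |D1| ≤ |a * Real.cos ψ - 2*b*Real.sin ψ|
            + |Real.exp (-W) * (a*Real.cos (2*b*τ+ψ) - 2*b*Real.sin (2*b*τ+ψ))| := abs_sub _ _
        _ ≤ (a+2*b) + 1*(a+2*b) := by
            refine add_le_add e1 ?_
            rw [abs_mul, abs_of_pos (Real.exp_pos _)]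
            exact mul_le_mul hexpW e2 (abs_nonneg _) one_pos.le
        _ = 2*(a+2*b) := by ring
    have hD2abs : |D2| ≤ 2*(a+2*b) := by
      have e1 : |2*b*Real.cos ψ + a*Real.sin ψ| ≤ 2*b + a :=
        abs_trig₂ (2*b) a ψ ψ (by positivity) hapos.le
      have e2 : |2*b*Real.cos (2*b*τ+ψ) + a*Real.sin (2*b*τ+ψ)| ≤ 2*b + a :=
        abs_trig₂ (2*b) a _ _ (by positivity) hapos.le
      calc |D2| ≤ |2*b*Real.cos ψ + a*Real.sin ψ|
            + |Real.exp (-W) * (2*b*Real.cos (2*b*τ+ψ) + a*Real.sin (2*b*τ+ψ))| := abs_sub _ _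
        _ ≤ (2*b+a) + 1*(2*b+a) := by
            refine add_le_add e1 ?_
            rw [abs_mul, abs_of_pos (Real.exp_pos _)]
            exact mul_le_mul hexpW e2 (abs_nonneg _) one_pos.le
        _ ≤ 2*(a+2*b) := by linarith
    constructor
    · -- part 1 bound
      have heq : lam^(σ+(1:ℝ)/2) * uTau δ σ W ψ lam
          - s/b*(Real.cos ψ*(1-Real.exp (-W))/(2*δ)) = -(u*s^2*D1/(b*(2*K))) := by
        rw [hI1, hpow1, ← hs2, ha_def]
        field_simp
        ring
      rw [heq, abs_neg]
      have habs : |u*s^2*D1/(b*(2*K))| = u*s^2*|D1|/(b*(2*K)) := by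
        rw [abs_div, abs_mul, abs_mul, abs_of_pos hu, abs_of_pos (pow_pos hs 2),
          abs_of_pos (show (0:ℝ) < b*(2*K) by positivity)]
      rw [habs, div_le_iff₀ (show (0:ℝ) < b*(2*K) by positivity)]
      have c1 : u*s^2*|D1| ≤ u*s^2*(2*(a+2*b)) :=
        mul_le_mul_of_nonneg_left hD1abs (by positivity)
      have c2 : u*s^2*(2*(a+2*b)) ≤ u*(2*z)*(2*(a+2*b)) := by
        rw [hs2]
        exact mul_le_mul_of_nonneg_right (mul_le_mul_of_nonneg_left hz2 hu.le) (by positivity)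
      have c3 : u*(2*z)*(2*(a+2*b)) ≤ 2*u*(b*(2*K)) := by
        rw [← hb2, hKdef]
        have hk1 : b*(a+2*b) ≤ a^2+4*b^2 := by
          linarith only [sq_nonneg (a-b), mul_pos hapos hbpos, sq_nonneg b]
        have h := mul_le_mul_of_nonneg_left hk1 (show (0:ℝ) ≤ 4*(u*b) by positivity)
        linarith only [h]
      linarith only [c1, c2, c3]
    · -- part 2 bound
      have heq2 : lam^σ * uTau' δ σ W ψ lam
          - -δ*u*(lam^(σ+(1:ℝ)/2) * uTau δ σ W ψ lam)
          - Real.sin ψ*(1-Real.exp (-W))/(2*δ) = u*s*D2/(2*K) := by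
        rw [hU', hσpow, hpow1, ← hs2, ha_def]
        field_simp
        ring
      rw [heq2]
      have habs : |u*s*D2/(2*K)| = u*s*|D2|/(2*K) := by
        rw [abs_div, abs_mul, abs_mul, abs_of_pos hu, abs_of_pos hs,
          abs_of_pos (show (0:ℝ) < 2*K by positivity)]
      rw [habs, div_le_iff₀ (show (0:ℝ) < 2*K by positivity)]
      have c1 : s*|D2| ≤ s*(2*(a+2*b)) := mul_le_mul_of_nonneg_left hD2abs hs.le
      have c2 : s*(2*(a+2*b)) ≤ 2*(2*K) := by
        rw [hKdef]
        have h1' := mul_le_mul_of_nonneg_right h3s (show (0:ℝ) ≤ a+2*b by positivity)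
        have h2' : 16*(b*(a+2*b)) ≤ 12*(a^2+4*b^2) := by
          linarith only [sq_nonneg (a-2*b), sq_nonneg a]
        linarith only [h1', h2']
      linarith only [mul_le_mul_of_nonneg_left (c1.trans c2) hu.le]
  -- assemble part 1
  have hg0 : Tendsto (fun lam : ℝ => 2 * lam^(σ-(1:ℝ)/2)) atTop (nhds 0) := by
    simpa using hσhalf.const_mul 2
  have hM1 : Tendsto (fun lam : ℝ => lam ^ ((1:ℝ)/2) / bl δ σ lam
      * (Real.cos ψ * (1-Real.exp (-W))/(2*δ))) atTop
      (nhds ((1/(2*δ))*(1-Real.exp (-W))*Real.cos ψ)) := by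
    have h := hratio.mul_const (Real.cos ψ * (1-Real.exp (-W))/(2*δ))
    rw [one_mul] at h
    convert h using 2
    ring
  have h_rem1 : Tendsto (fun lam : ℝ => lam ^ (σ + (1:ℝ)/2) * uTau δ σ W ψ lam
      - lam ^ ((1:ℝ)/2) / bl δ σ lam * (Real.cos ψ * (1-Real.exp (-W))/(2*δ))) atTop (nhds 0) := by
    refine squeeze_zero_norm' ?_ hg0
    filter_upwards [hbound] with lam h
    rw [Real.norm_eq_abs]
    exact h.1
  have hpart1 : Tendsto (fun lam : ℝ => lam ^ (σ + (1 : ℝ) / 2) * uTau δ σ W ψ lam) atTop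
      (nhds ((1 / (2 * δ)) * (1 - Real.exp (-W)) * Real.cos ψ)) := by
    have h := h_rem1.add hM1
    rw [zero_add] at h
    exact h.congr (fun lam => by ring)
  refine ⟨hpart1, ?_⟩
  -- part 2
  have hT1 : Tendsto (fun lam : ℝ => -δ*lam^(σ-(1:ℝ)/2)*(lam ^ (σ + (1:ℝ)/2) * uTau δ σ W ψ lam))
      atTop (nhds 0) := by
    have h0 : Tendsto (fun lam : ℝ => -δ*lam^(σ-(1:ℝ)/2)) atTop (nhds 0) := by
      simpa using hσhalf.const_mul (-δ)
    simpa using h0.mul hpart1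
  have h_rem2 : Tendsto (fun lam : ℝ => lam ^ σ * uTau' δ σ W ψ lam
      - -δ*lam^(σ-(1:ℝ)/2)*(lam ^ (σ + (1:ℝ)/2) * uTau δ σ W ψ lam)
      - Real.sin ψ * (1-Real.exp (-W))/(2*δ)) atTop (nhds 0) := by
    refine squeeze_zero_norm' ?_ hg0
    filter_upwards [hbound] with lam h
    rw [Real.norm_eq_abs]
    exact h.2
  have h := (h_rem2.add hT1).add (tendsto_const_nhds :
    Tendsto (fun _ : ℝ => Real.sin ψ * (1-Real.exp (-W))/(2*δ)) atTop _)
  rw [zero_add, zero_add] at h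
  have e : Real.sin ψ * (1-Real.exp (-W))/(2*δ)
      = (1/(2*δ))*(1-Real.exp (-W))*Real.sin ψ := by ring
  rw [e] at h
  exact h.congr (fun lam => by ring)
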